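/- Let λ1, λ2, μ1, μ2 > 0 with μ1μ2 > λ1(μ2+λ2). Define φ_N(s) = π0·μ1(λ1+λ2+μ2 − λ1 e^s)/(μ1μ2 + μ1λ1 − e^s(λ1² + λ1λ2 + λ1μ1 + λ1μ2) + λ1² e^{2s}) where π0 = μ2/(μ2+λ2) − λ1/μ1. Then φ_N(0) = 1 and φ_N'(0) = λ1(2λ2μ2 + λ2μ1 + λ2² + μ2²)/((μ2+λ2)(μ1μ2 − λ1(μ2+λ2))). -/

import Mathlib

theorem stmt_13 (l1 l2 m1 m2 : ℝ) (hl1 : 0 < l1) (hl2 : 0 < l2)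
    (hm1 : 0 < m1) (hm2 : 0 < m2) (hstab : m1 * m2 > l1 * (m2 + l2))
    (p0 : ℝ) (hp0 : p0 = m2 / (m2 + l2) - l1 / m1)
    (φ : ℝ → ℝ)
    (hφ : φ = fun s => p0 * m1 * (l1 + l2 + m2 - l1 * Real.exp s)
      / (m1 * m2 + m1 * l1
        - Real.exp s * (l1 ^ 2 + l1 * l2 + l1 * m1 + l1 * m2)
        + l1 ^ 2 * Real.exp (2 * s))) :
    φ 0 = 1 ∧
    deriv φ 0 = l1 * (2 * l2 * m2 + l2 * m1 + l2 ^ 2 + m2 ^ 2)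
      / ((m2 + l2) * (m1 * m2 - l1 * (m2 + l2))) := by
  have hml : (0:ℝ) < m2 + l2 := by linarith
  have hK : (0:ℝ) < m1 * m2 - l1 * (m2 + l2) := by linarith
  have hD0 : m1 * m2 + m1 * l1
        - Real.exp 0 * (l1 ^ 2 + l1 * l2 + l1 * m1 + l1 * m2)
        + l1 ^ 2 * Real.exp (2 * 0) = m1 * m2 - l1 * (m2 + l2) := by
    norm_num [Real.exp_zero]; ring
  have hne : m1 * m2 + m1 * l1
        - Real.exp 0 * (l1 ^ 2 + l1 * l2 + l1 * m1 + l1 * m2)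
        + l1 ^ 2 * Real.exp (2 * 0) ≠ 0 := by rw [hD0]; exact hK.ne'
  have hexp : HasDerivAt Real.exp 1 0 := by simpa using Real.hasDerivAt_exp 0
  have hexp2 : HasDerivAt (fun s => Real.exp (2 * s)) (Real.exp (2 * 0) * (2 * 1)) 0 :=
    ((hasDerivAt_id 0).const_mul 2).exp
  have hnum : HasDerivAt (fun s => p0 * m1 * (l1 + l2 + m2 - l1 * Real.exp s))
      (p0 * m1 * (-(l1 * 1))) 0 :=
    ((hexp.const_mul l1).const_sub (l1 + l2 + m2)).const_mul (p0 * m1)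
  have hden : HasDerivAt (fun s => m1 * m2 + m1 * l1
        - Real.exp s * (l1 ^ 2 + l1 * l2 + l1 * m1 + l1 * m2)
        + l1 ^ 2 * Real.exp (2 * s))
      (0 - 1 * (l1 ^ 2 + l1 * l2 + l1 * m1 + l1 * m2) + l1 ^ 2 * (Real.exp (2*0) * (2*1))) 0 :=
    ((hasDerivAt_const 0 (m1 * m2 + m1 * l1)).sub
      (hexp.mul_const _)).add (hexp2.const_mul (l1 ^ 2))
  have hdiv := hnum.div hden hne
  constructor
  · rw [hφ]
    simp only
    rw [show Real.exp 0 = 1 from Real.exp_zero]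
    norm_num
    rw [hp0]
    rw [show m1 * m2 + m1 * l1 - (l1 ^ 2 + l1 * l2 + l1 * m1 + l1 * m2) + l1 ^ 2
         = m1 * m2 - l1 * (m2 + l2) from by ring]
    field_simp [hK.ne']
    rw [mul_div_right_comm, div_self (by intro h; nlinarith), one_mul]
    ring
  · rw [hφ]
    erw [hdiv.deriv]
    rw [hD0]
    rw [show Real.exp 0 = 1 from Real.exp_zero, show Real.exp (2*(0:ℝ)) = 1 from by norm_num]
    rw [hp0]
    field_simp
    ring
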